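/- Let A, B ⊂ 𝕊 be two finite sets. There exists an element c ∈ 𝕊 such that c ⊖ a > 𝟘 and b ⊖ c > 𝟘 for all a ∈ A and b ∈ B if and only if b ⊖ a > 𝟘 for all pairs (a,b) ∈ A × B; moreover, in that case c can be chosen to be a signed element (c ∈ 𝕋±). -/
import Mathlib


/-!  Signed tropical numbers 𝕋±, the symmetrized tropical semiring 𝕊,
     and signed tropical convexity (Loho–Végh). -/

inductive SSign : Type where
  | pos : SSign
  | neg : SSign
  | bal : SSign
deriving DecidableEq

/-- The symmetrized tropical semiring 𝕊: the tropical zero 𝟘 = -∞ together with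
elements `elem s r` where `s` is a sign (⊕, ⊖ or •) and `r` a real number. -/
inductive STrop : Type where
  | zero : STrop
  | elem : SSign → ℝ → STrop

namespace STrop

/-- membership in the signed tropical numbers 𝕋± (i.e. not balanced-nonzero). -/
def isSigned : STrop → Prop
  | elem SSign.bal _ => False
  | _ => True

/-- membership in 𝕋≥, the nonnegative tropical numbers. -/
def nneg : STrop → Prop
  | zero => True
  | elem SSign.pos _ => True
  | _ => False

/-- membership in 𝕋≤, the nonpositive tropical numbers. -/
def npos : STrop → Prop
  | zero => True
  | elem SSign.neg _ => True
  | _ => False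

/-- strictly positive signed element (sign ⊕, not 𝟘). -/
def isPos : STrop → Prop
  | elem SSign.pos _ => True
  | _ => False

/-- balanced or 𝟘 (membership in 𝕋•). -/
def balZero : STrop → Prop
  | zero => True
  | elem SSign.bal _ => True
  | _ => False

/-- the negation map ⊖. -/
def neg : STrop → STrop
  | zero => zero
  | elem SSign.pos r => elem SSign.neg r
  | elem SSign.neg r => elem SSign.pos r
  | elem SSign.bal r => elem SSign.bal r

/-- tropical addition ⊕ on 𝕊. -/
noncomputable def add : STrop → STrop → STrop
  | zero, y => y
  | x, zero => x
  | elem s r, elem t u =>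
    if r < u then elem t u
    else if u < r then elem s r
    else if s = t then elem s r
    else elem SSign.bal r

def signMul : SSign → SSign → SSign
  | SSign.pos, t => t
  | SSign.neg, SSign.pos => SSign.neg
  | SSign.neg, SSign.neg => SSign.pos
  | SSign.neg, SSign.bal => SSign.bal
  | SSign.bal, _ => SSign.bal

/-- tropical multiplication ⊙ on 𝕊. -/
def mul : STrop → STrop → STrop
  | zero, _ => zero
  | _, zero => zero
  | elem s r, elem t u => elem (signMul s t) (r + u)

/-- a ⊖ b := a ⊕ (⊖b). -/
noncomputable def sub (x y : STrop) : STrop := add x (neg y)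

/-- the tropical one, the signed element ⊕0. -/
def one : STrop := elem SSign.pos 0

/-- the absolute value |·| : 𝕊 → 𝕋≥. -/
def absS : STrop → STrop
  | zero => zero
  | elem _ r => elem SSign.pos r

/-- strict order: x > y iff x ⊖ y is a strictly positive signed element. -/
def sgt (x y : STrop) : Prop := isPos (sub x y)

/-- balance relation: x ⋈ y iff x ⊖ y is balanced or 𝟘. -/
def bal (x y : STrop) : Prop := balZero (sub x y)

/-- the relation ⊵ : x ⊵ y iff x > y or x ⋈ y. -/
def teq (x y : STrop) : Prop := sgt x y ∨ bal x y

/-- the total order ≤ on the signed tropical numbers 𝕋±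
(arbitrarily `False` whenever a balanced element is involved). -/
def sle : STrop → STrop → Prop
  | zero, zero => True
  | zero, elem SSign.pos _ => True
  | elem SSign.neg _, zero => True
  | elem SSign.neg _, elem SSign.pos _ => True
  | elem SSign.pos r, elem SSign.pos u => r ≤ u
  | elem SSign.neg r, elem SSign.neg u => u ≤ r
  | _, _ => False

/-- U(a): the set of signed numbers incomparable with a; the singleton {a}
for signed a, and the order interval [⊖|a|, |a|] for balanced a. -/
def U : STrop → Set STrop
  | elem SSign.bal r => {x | isSigned x ∧ sle (elem SSign.neg r) x ∧ sle x (elem SSign.pos r)}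
  | a => {a}

/-- tropical sum of finitely many elements of 𝕊. -/
noncomputable def sumFin : ∀ {n : ℕ}, (Fin n → STrop) → STrop
  | 0, _ => zero
  | _ + 1, f => add (f 0) (sumFin fun i => f i.succ)

/-- matrix–vector product A ⊙ x over 𝕊. -/
noncomputable def mv {d n : ℕ} (A : Fin d → Fin n → STrop) (x : Fin n → STrop) : Fin d → STrop :=
  fun i => sumFin fun j => mul (A i j) (x j)

/-- vectors in 𝕋±^d. -/
def isSignedVec {d : ℕ} (v : Fin d → STrop) : Prop := ∀ i, isSigned (v i)

/-- the signed tropical convex hull of the columns of a matrix A: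
tconv(A) = {z ∈ 𝕋±^d : z ⋈ A⊙x for some x ∈ 𝕋≥^n with ⊕_j x_j = 0}. -/
def tconv {d n : ℕ} (A : Fin d → Fin n → STrop) : Set (Fin d → STrop) :=
  {z | isSignedVec z ∧ ∃ x : Fin n → STrop,
    (∀ j, nneg (x j)) ∧ sumFin x = one ∧ ∀ i, bal (z i) (mv A x i)}

/-- the signed tropical convex hull of an arbitrary set: the union of the hulls
of all finite collections of points of M. -/
def tconvSet {d : ℕ} (M : Set (Fin d → STrop)) : Set (Fin d → STrop) :=
  ⋃ (n : ℕ) (A : Fin d → Fin n → STrop) (_ : ∀ j, (fun i => A i j) ∈ M), tconv A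

/-- a set M ⊆ 𝕋±^d is tropically convex iff M = tconv(M). -/
def TropConvex {d : ℕ} (M : Set (Fin d → STrop)) : Prop := M = tconvSet M

/-- evaluation a ⊙ (0, x₁, …, x_d)ᵀ of an affine functional. -/
noncomputable def affEval {d : ℕ} (a : Fin (d + 1) → STrop) (x : Fin d → STrop) : STrop :=
  sumFin fun j => mul (a j) ((Fin.cons one x : Fin (d + 1) → STrop) j)

/-- the open signed tropical halfspace H⁺(a) = {x ∈ 𝕋±^d : a⊙(0,x)ᵀ > 𝟘}. -/
def Hopen {d : ℕ} (a : Fin (d + 1) → STrop) : Set (Fin d → STrop) :=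
  {x | isSignedVec x ∧ sgt (affEval a x) zero}

/-- the closed signed tropical halfspace H̄⁺(a) = {x ∈ 𝕋±^d : a⊙(0,x)ᵀ ⊵ 𝟘}. -/
def Hclosed {d : ℕ} (a : Fin (d + 1) → STrop) : Set (Fin d → STrop) :=
  {x | isSignedVec x ∧ teq (affEval a x) zero}

/-- the non-negative kernel nnker(A). -/
def nnker {d n : ℕ} (A : Fin d → Fin n → STrop) : Set (Fin n → STrop) :=
  {x | (∀ j, nneg (x j)) ∧ x ≠ (fun _ => zero) ∧ ∀ i, balZero (mv A x i)}

/-- the open tropical cone sep(A) = {y ∈ 𝕋±^d : yᵀ⊙A > 𝟘 componentwise}. -/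
def sep {d : ℕ} {J : Type} (A : Fin d → J → STrop) : Set (Fin d → STrop) :=
  {y | isSignedVec y ∧ ∀ j, isPos (sumFin fun i => mul (y i) (A i j))}

end STrop

noncomputable def gval : STrop → ℝ
  | STrop.zero => 0
  | STrop.elem SSign.pos r => Real.exp r
  | STrop.elem SSign.neg r => -Real.exp r
  | STrop.elem SSign.bal r => Real.exp r

noncomputable def hval : STrop → ℝ
  | STrop.zero => 0
  | STrop.elem SSign.pos r => Real.exp r
  | STrop.elem SSign.neg r => -Real.exp r
  | STrop.elem SSign.bal r => -Real.exp r

lemma sgt_iff_val (a b : STrop) : STrop.sgt b a ↔ gval a < hval b := by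
  have e : ∀ x y : ℝ, x < y ↔ Real.exp x < Real.exp y := fun x y => Real.exp_lt_exp.symm
  rcases a with _ | ⟨s, r⟩
  · rcases b with _ | ⟨t, u⟩
    · simp [STrop.sgt, STrop.sub, STrop.neg, STrop.add, STrop.isPos, gval, hval]
    · cases t <;>
        simp [STrop.sgt, STrop.sub, STrop.neg, STrop.add, STrop.isPos, gval, hval,
          Real.exp_pos, (Real.exp_pos u).le] <;>
        nlinarith [Real.exp_pos u]
  · rcases b with _ | ⟨t, u⟩
    · cases s <;>
        simp [STrop.sgt, STrop.sub, STrop.neg, STrop.add, STrop.isPos, gval, hval,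
          Real.exp_pos, (Real.exp_pos r).le] <;>
        nlinarith [Real.exp_pos r]
    · cases s <;> cases t <;>
        simp only [STrop.sgt, STrop.sub, STrop.neg, STrop.add, gval, hval] <;>
        split_ifs <;>
        simp_all [STrop.isPos, Real.exp_lt_exp, neg_lt_neg_iff] <;>
        first
          | linarith [Real.exp_pos r, Real.exp_pos u]
          | (intro h; linarith [Real.exp_pos r, Real.exp_pos u])
          | (constructor <;> intro h <;> linarith [Real.exp_pos r, Real.exp_pos u])

lemma hval_le_gval (x : STrop) : hval x ≤ gval x := by
  rcases x with _ | ⟨s, r⟩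
  · exact le_refl _
  · cases s <;> simp [gval, hval] <;> nlinarith [Real.exp_pos r]

lemma gval_eq_hval_of_signed {x : STrop} (hx : STrop.isSigned x) : gval x = hval x := by
  rcases x with _ | ⟨s, r⟩
  · rfl
  · cases s <;> simp_all [STrop.isSigned, gval, hval]

lemma exists_signed_val (v : ℝ) : ∃ c : STrop, STrop.isSigned c ∧ gval c = v := by
  rcases lt_trichotomy v 0 with h | h | h
  · refine ⟨STrop.elem SSign.neg (Real.log (-v)), trivial, ?_⟩
    show -Real.exp (Real.log (-v)) = v
    rw [Real.exp_log (by linarith : (0:ℝ) < -v)]; ring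
  · exact ⟨STrop.zero, trivial, h.symm⟩
  · exact ⟨STrop.elem SSign.pos (Real.log v), trivial, by
      simp [gval, Real.exp_log h]⟩

/-- elimination for strict inequalities: a separating c exists iff
b ⊖ a > 𝟘 for all pairs, and then c can be chosen signed. -/
theorem elimination_strict (A B : Finset STrop) :
    ((∃ c : STrop, (∀ a ∈ A, STrop.sgt c a) ∧ (∀ b ∈ B, STrop.sgt b c)) ↔
      (∀ a ∈ A, ∀ b ∈ B, STrop.sgt b a)) ∧
    ((∀ a ∈ A, ∀ b ∈ B, STrop.sgt b a) →
      ∃ c : STrop, STrop.isSigned c ∧ (∀ a ∈ A, STrop.sgt c a) ∧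
        (∀ b ∈ B, STrop.sgt b c)) := by
  have key : (∀ a ∈ A, ∀ b ∈ B, STrop.sgt b a) →
      ∃ c : STrop, STrop.isSigned c ∧ (∀ a ∈ A, STrop.sgt c a) ∧
        (∀ b ∈ B, STrop.sgt b c) := by
    intro H
    have hv : ∃ v : ℝ, (∀ a ∈ A, gval a < v) ∧ (∀ b ∈ B, v < hval b) := by
      rcases A.eq_empty_or_nonempty with hA | hA <;>
        rcases B.eq_empty_or_nonempty with hB | hB
      · exact ⟨0, by simp [hA], by simp [hB]⟩
      · refine ⟨(B.image hval).min' (hB.image _) - 1, by simp [hA], fun b hb => ?_⟩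
        have := Finset.min'_le (B.image hval) (hval b) (Finset.mem_image_of_mem _ hb)
        linarith
      · refine ⟨(A.image gval).max' (hA.image _) + 1, fun a ha => ?_, by simp [hB]⟩
        have := Finset.le_max' (A.image gval) (gval a) (Finset.mem_image_of_mem _ ha)
        linarith
      · set M := (A.image gval).max' (hA.image _) with hM
        set m := (B.image hval).min' (hB.image _) with hm
        obtain ⟨a, ha, hMa⟩ := Finset.mem_image.mp (Finset.max'_mem (A.image gval) (hA.image _))
        obtain ⟨b, hb, hmb⟩ := Finset.mem_image.mp (Finset.min'_mem (B.image hval) (hB.image _))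
        have hMm : M < m := by
          rw [← hM] at hMa; rw [← hm] at hmb
          rw [← hMa, ← hmb]; exact (sgt_iff_val a b).mp (H a ha b hb)
        refine ⟨(M + m) / 2, fun a' ha' => ?_, fun b' hb' => ?_⟩
        · have := Finset.le_max' (A.image gval) (gval a') (Finset.mem_image_of_mem _ ha')
          rw [← hM] at this; linarith
        · have := Finset.min'_le (B.image hval) (hval b') (Finset.mem_image_of_mem _ hb')
          rw [← hm] at this; linarith
    obtain ⟨v, h1, h2⟩ := hv
    obtain ⟨c, hc, hcv⟩ := exists_signed_val v
    have hcv' : hval c = v := by rw [← gval_eq_hval_of_signed hc, hcv]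
    refine ⟨c, hc, fun a ha => (sgt_iff_val a c).mpr (by rw [hcv']; exact h1 a ha),
      fun b hb => (sgt_iff_val c b).mpr (by rw [hcv]; exact h2 b hb)⟩
  refine ⟨⟨fun ⟨c, h1, h2⟩ a ha b hb => ?_, fun H => (key H).imp fun c hc => hc.2⟩, key⟩
  have hca := (sgt_iff_val a c).mp (h1 a ha)
  have hbc := (sgt_iff_val c b).mp (h2 b hb)
  exact (sgt_iff_val a b).mpr (lt_of_lt_of_le (hca.trans_le (hval_le_gval c)) hbc.le)
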